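/- Let d ≥ 2 be an integer and α = (d-1)/d. For an integer N ≥ 1 and 1 ≤ i ≤ N^d, define the Hardy constant B₋(N,i) = max over integers x with 0 ≤ x < i of ( ∑_{y=x}^{i-1} exp(y^α) (max(y,1))^{-α} ) · ( ∑_{y=0}^{x} exp(-y^α) ). Then there exists k = k(d) ≥ 1 such that for all N ≥ 1 and all integers 1 ≤ i ≤ N^d: (1/k) · i^{1-2α} · exp(i^α) ≤ B₋(N,i) ≤ k · i^{1-2α} · exp(i^α). -/

import Mathlib

set_option maxHeartbeats 1000000


/-!
Hardy constant `B₋` of the birth-and-death toy model (`α = (d-1)/d`, `d ≥ 2`):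
it is of order `i^{1-2α} e^{i^α}`.
-/

noncomputable section

/-- The exponent `α = (d-1)/d`. -/
def alphaOf (d : ℕ) : ℝ := ((d : ℝ) - 1) / d

/-- The Hardy constant
`B₋(N,i) = max_{0 ≤ x < i} (∑_{y=x}^{i-1} e^{y^α} (max(y,1))^{-α}) ·
(∑_{y=0}^{x} e^{-y^α})`. -/
def Bminus (d N i : ℕ) : ℝ :=
  sSup ((fun x : ℕ =>
      (∑ y ∈ Finset.Icc x (i - 1),
        Real.exp ((y : ℝ) ^ alphaOf d) * ((max y 1 : ℕ) : ℝ) ^ (-alphaOf d)) *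
      (∑ y ∈ Finset.range (x + 1), Real.exp (-(y : ℝ) ^ alphaOf d))) ''
    {x : ℕ | x < i})


open Real Finset

lemma bern_upper {p a b : ℝ} (hp0 : 0 ≤ p) (hp1 : p ≤ 1) (ha : 1 ≤ a) (hab : a ≤ b) :
    b ^ p ≤ a ^ p + p * a ^ (p - 1) * (b - a) := by
  have ha0 : (0:ℝ) < a := lt_of_lt_of_le one_pos ha
  set s : ℝ := (b - a) / a with hs
  have hs0 : 0 ≤ s := div_nonneg (by linarith) ha0.le
  have hb : b = a * (1 + s) := by rw [hs]; field_simp; ring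
  have h1 : b ^ p = a ^ p * (1 + s) ^ p := by
    rw [hb, Real.mul_rpow ha0.le (by linarith)]
  have h2 : (1 + s) ^ p ≤ 1 + p * s :=
    rpow_one_add_le_one_add_mul_self (by linarith) hp0 hp1
  have h3 : a ^ (p - 1) = a ^ p / a := by
    rw [Real.rpow_sub ha0, Real.rpow_one]
  have hap : 0 ≤ a ^ p := Real.rpow_nonneg ha0.le p
  calc b ^ p = a ^ p * (1 + s) ^ p := h1
    _ ≤ a ^ p * (1 + p * s) := by nlinarith
    _ = a ^ p + p * a ^ (p - 1) * (b - a) := by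
        rw [h3, hs]; field_simp

lemma bern_lower {p a b : ℝ} (hp0 : 0 ≤ p) (hp1 : p ≤ 1) (ha : 0 ≤ a) (hab : a ≤ b)
    (hb : 1 ≤ b) :
    a ^ p + p * b ^ (p - 1) * (b - a) ≤ b ^ p := by
  have hb0 : (0:ℝ) < b := lt_of_lt_of_le one_pos hb
  set s : ℝ := (a - b) / b with hs
  have hs1 : -1 ≤ s := by
    rw [hs, le_div_iff₀ hb0]; linarith
  have ha' : a = b * (1 + s) := by rw [hs]; field_simp; ring
  have h1 : a ^ p = b ^ p * (1 + s) ^ p := by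
    rw [ha', Real.mul_rpow hb0.le (by linarith)]
  have h2 : (1 + s) ^ p ≤ 1 + p * s :=
    rpow_one_add_le_one_add_mul_self hs1 hp0 hp1
  have h3 : b ^ (p - 1) = b ^ p / b := by
    rw [Real.rpow_sub hb0, Real.rpow_one]
  have hbp : 0 ≤ b ^ p := Real.rpow_nonneg hb0.le p
  have key : a ^ p ≤ b ^ p * (1 + p * s) := by
    rw [h1]; nlinarith
  have : b ^ p * (1 + p * s) = b ^ p - p * b ^ (p - 1) * (b - a) := by
    rw [h3, hs]; field_simp; ring
  linarith [key, this.symm.le]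

lemma sum_inv_sq (n : ℕ) : ∑ y ∈ Finset.range n, (1:ℝ)/((y:ℝ)+1)^2 ≤ 2 := by
  have key : ∀ m : ℕ, ∑ y ∈ Finset.range (m+1), (1:ℝ)/((y:ℝ)+1)^2 ≤ 2 - 1/((m:ℝ)+1) := by
    intro m
    induction m with
    | zero => norm_num
    | succ k ih =>
      rw [Finset.sum_range_succ]
      have hk : (0:ℝ) < (k:ℝ) + 1 := by positivity
      have hk2 : (0:ℝ) < (k:ℝ) + 2 := by positivity
      have h5 : (1:ℝ)/((k:ℝ)+1+1)^2 ≤ 1/((k:ℝ)+1) - 1/((k:ℝ)+1+1) := by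
        rw [div_sub_div _ _ hk.ne' (by positivity), div_le_div_iff₀ (by positivity) (by positivity)]
        nlinarith
      push_cast
      linarith
  cases n with
  | zero => simp
  | succ m =>
    refine (key m).trans ?_
    have : (0:ℝ) < (m:ℝ)+1 := by positivity
    have : 0 ≤ 1/((m:ℝ)+1) := by positivity
    linarith

lemma exp_ge_quarter_sq {s : ℝ} (hs : 0 ≤ s) : s^2/4 ≤ Real.exp s := by
  have h1 : 1 + s/2 ≤ Real.exp (s/2) := by
    have := Real.add_one_le_exp (s/2); linarith
  have h2 : (s/2)^2 ≤ (1 + s/2)^2 := by nlinarith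
  have h3 : (1 + s/2)^2 ≤ (Real.exp (s/2))^2 := by
    have : 0 ≤ 1 + s/2 := by linarith
    nlinarith [Real.exp_pos (s/2)]
  have h4 : (Real.exp (s/2))^2 = Real.exp s := by
    rw [← Real.exp_nat_mul]; congr 1; push_cast; ring
  nlinarith

lemma exp_ge_pow4 {t : ℝ} (ht : 0 ≤ t) : t^4/256 ≤ Real.exp t := by
  have h1 : 1 + t/4 ≤ Real.exp (t/4) := by
    have := Real.add_one_le_exp (t/4); linarith
  have h0 : 0 ≤ t/4 := by linarith
  have h2 : (t/4)^4 ≤ (1 + t/4)^4 := by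
    apply pow_le_pow_left₀ h0 (by linarith)
  have h3 : (1 + t/4)^4 ≤ (Real.exp (t/4))^4 := by
    apply pow_le_pow_left₀ (by linarith) h1
  have h4 : (Real.exp (t/4))^4 = Real.exp t := by
    rw [← Real.exp_nat_mul]; congr 1; push_cast; ring
  have : (t/4)^4 = t^4/256 := by ring
  linarith

lemma T_bound {α : ℝ} (hα2 : 1/2 ≤ α) (x : ℕ) :
    ∑ y ∈ Finset.range (x+1), Real.exp (-(y:ℝ)^α) ≤ 2048 := by
  have hterm : ∀ y : ℕ, Real.exp (-(y:ℝ)^α) ≤ 1024 * ((1:ℝ)/((y:ℝ)+1)^2) := by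
    intro y
    rcases Nat.eq_zero_or_pos y with h | h
    · subst h
      simp only [Nat.cast_zero, Real.zero_rpow (by linarith : α ≠ 0), neg_zero, Real.exp_zero]
      norm_num
    · have hy1 : (1:ℝ) ≤ (y:ℝ) := by exact_mod_cast h
      have hy0 : (0:ℝ) ≤ (y:ℝ) := by linarith
      -- exp (y^α) ≥ y^2/256
      have h1 : (y:ℝ)^((1:ℝ)/2) ≤ (y:ℝ)^α := rpow_le_rpow_of_exponent_le hy1 hα2
      have h2 : ((y:ℝ)^((1:ℝ)/2))^4/256 ≤ Real.exp ((y:ℝ)^((1:ℝ)/2)) :=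
        exp_ge_pow4 (rpow_nonneg hy0 _)
      have h3 : ((y:ℝ)^((1:ℝ)/2))^(4:ℕ) = (y:ℝ)^(2:ℕ) := by
        rw [← Real.rpow_natCast ((y:ℝ)^((1:ℝ)/2)) 4, ← Real.rpow_mul hy0]
        norm_num
      have h4 : Real.exp ((y:ℝ)^((1:ℝ)/2)) ≤ Real.exp ((y:ℝ)^α) := Real.exp_le_exp.mpr h1
      have h5 : (y:ℝ)^2/256 ≤ Real.exp ((y:ℝ)^α) := by
        rw [← h3]; exact h2.trans h4
      have hE : 0 < Real.exp ((y:ℝ)^α) := Real.exp_pos _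
      have hq : (0:ℝ) < ((y:ℝ)+1)^2 := by positivity
      rw [Real.exp_neg, mul_one_div, inv_eq_one_div, div_le_div_iff₀ hE hq]
      nlinarith
  calc ∑ y ∈ Finset.range (x+1), Real.exp (-(y:ℝ)^α)
      ≤ ∑ y ∈ Finset.range (x+1), 1024 * ((1:ℝ)/((y:ℝ)+1)^2) :=
        Finset.sum_le_sum fun y _ => hterm y
    _ = 1024 * ∑ y ∈ Finset.range (x+1), (1:ℝ)/((y:ℝ)+1)^2 := by rw [Finset.mul_sum]
    _ ≤ 1024 * 2 := by
        have := sum_inv_sq (x+1)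
        linarith
    _ = 2048 := by norm_num

lemma S_bound {α : ℝ} (hα2 : 1/2 ≤ α) (hα1 : α < 1) (i : ℕ) (hi : 1 ≤ i) :
    ∑ y ∈ Finset.Icc 0 (i-1), Real.exp ((y:ℝ)^α) * ((max y 1 : ℕ):ℝ)^(-α)
      ≤ 104 * ((i:ℝ)^(1-2*α) * Real.exp ((i:ℝ)^α)) := by
  have hα0 : (0:ℝ) < α := by linarith
  have hI0 : (0:ℝ) < (i:ℝ) := by exact_mod_cast hi
  have hI1 : (1:ℝ) ≤ (i:ℝ) := by exact_mod_cast hi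
  have hIcc : Finset.Icc 0 (i-1) = Finset.range i := by
    ext y; simp only [Finset.mem_Icc, Finset.mem_range]; omega
  set E : ℝ := Real.exp (((i:ℝ)/2)^α) with hE
  set C : ℝ := 4 * (i:ℝ)^(1-2*α) with hC
  have hC0 : 0 ≤ C := by positivity
  set D : ℕ → ℝ := fun y => Real.exp (((y:ℝ)+1)^α) - Real.exp ((y:ℝ)^α) with hD
  have hD0 : ∀ y : ℕ, 0 ≤ D y := by
    intro y
    have : (y:ℝ)^α ≤ ((y:ℝ)+1)^α := rpow_le_rpow (Nat.cast_nonneg y) (by linarith) hα0.le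
    simp only [hD, sub_nonneg, Real.exp_le_exp]
    exact this
  have hpoint : ∀ y ∈ Finset.range i,
      Real.exp ((y:ℝ)^α) * ((max y 1 : ℕ):ℝ)^(-α) ≤ E + C * D y := by
    intro y hy
    rw [Finset.mem_range] at hy
    have hyI : (y:ℝ) + 1 ≤ (i:ℝ) := by exact_mod_cast hy
    have hmax1 : (1:ℝ) ≤ ((max y 1 : ℕ):ℝ) := by
      have : 1 ≤ max y 1 := le_max_right y 1
      exact_mod_cast this
    rcases lt_or_ge (2*y) i with h2y | h2y
    · have hyhalf : (y:ℝ) ≤ (i:ℝ)/2 := by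
        have : (2*y:ℝ) + 1 ≤ (i:ℝ) := by exact_mod_cast h2y
        linarith
      have h1 : Real.exp ((y:ℝ)^α) ≤ E := by
        rw [hE]
        exact Real.exp_le_exp.mpr (rpow_le_rpow (Nat.cast_nonneg y) hyhalf hα0.le)
      have h2 : ((max y 1 : ℕ):ℝ)^(-α) ≤ 1 :=
        rpow_le_one_of_one_le_of_nonpos hmax1 (by linarith)
      have h3 : 0 ≤ Real.exp ((y:ℝ)^α) := (Real.exp_pos _).le
      nlinarith [mul_nonneg hC0 (hD0 y)]
    · have hy1 : 1 ≤ y := by omega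
      have hy1R : (1:ℝ) ≤ (y:ℝ) := by exact_mod_cast hy1
      have hmaxy : (max y 1 : ℕ) = y := max_eq_left hy1
      have hyhalf : (i:ℝ)/2 ≤ (y:ℝ) := by
        have : (i:ℝ) ≤ 2*(y:ℝ) := by exact_mod_cast h2y
        linarith
      have hb1 : α * ((y:ℝ)+1)^(α-1) ≤ ((y:ℝ)+1)^α - (y:ℝ)^α := by
        have := bern_lower hα0.le hα1.le (Nat.cast_nonneg y)
          (by linarith : (y:ℝ) ≤ (y:ℝ)+1) (by linarith : (1:ℝ) ≤ (y:ℝ)+1)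
        have e1 : ((y:ℝ)+1) - (y:ℝ) = 1 := by ring
        rw [e1, mul_one] at this
        linarith
      have hb2 : Real.exp ((y:ℝ)^α) * (((y:ℝ)+1)^α - (y:ℝ)^α) ≤ D y := by
        have h := Real.add_one_le_exp (((y:ℝ)+1)^α - (y:ℝ)^α)
        have hEp : 0 < Real.exp ((y:ℝ)^α) := Real.exp_pos _
        have hee : (y:ℝ)^α + (((y:ℝ)+1)^α - (y:ℝ)^α) = ((y:ℝ)+1)^α := by ring
        calc Real.exp ((y:ℝ)^α) * (((y:ℝ)+1)^α - (y:ℝ)^α)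
            ≤ Real.exp ((y:ℝ)^α) * (Real.exp ((((y:ℝ)+1)^α - (y:ℝ)^α)) - 1) := by nlinarith
          _ = Real.exp (((y:ℝ)+1)^α) - Real.exp ((y:ℝ)^α) := by
              rw [mul_sub, ← Real.exp_add, hee, mul_one]
          _ = D y := rfl
      have hb3 : Real.exp ((y:ℝ)^α) * (α * ((y:ℝ)+1)^(α-1)) ≤ D y := by
        have hEp : (0:ℝ) < Real.exp ((y:ℝ)^α) := Real.exp_pos _
        calc Real.exp ((y:ℝ)^α) * (α * ((y:ℝ)+1)^(α-1))
            ≤ Real.exp ((y:ℝ)^α) * (((y:ℝ)+1)^α - (y:ℝ)^α) := by nlinarith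
          _ ≤ D y := hb2
      have hp1pos : (0:ℝ) < ((y:ℝ)+1)^(α-1) := rpow_pos_of_pos (by linarith) _
      have hexp_le : Real.exp ((y:ℝ)^α) ≤ (1/α) * ((y:ℝ)+1)^(1-α) * D y := by
        have key : ((y:ℝ)+1)^(1-α) * ((y:ℝ)+1)^(α-1) = 1 := by
          rw [← Real.rpow_add (by linarith : (0:ℝ) < (y:ℝ)+1)]
          norm_num
        have hstep := mul_le_mul_of_nonneg_left hb3
          (le_of_lt (rpow_pos_of_pos (show (0:ℝ) < (y:ℝ)+1 by linarith) (1-α)))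
        have lhs_eq : ((y:ℝ)+1)^(1-α) * (Real.exp ((y:ℝ)^α) * (α * ((y:ℝ)+1)^(α-1)))
            = α * Real.exp ((y:ℝ)^α) := by
          linear_combination Real.exp ((y:ℝ)^α) * α * key
        rw [div_mul_eq_mul_div, div_mul_eq_mul_div, le_div_iff₀ hα0]
        linarith
      have hw1 : ((y:ℝ)+1)^(1-α) ≤ (i:ℝ)^(1-α) :=
        rpow_le_rpow (by linarith) hyI (by linarith)
      have hw2 : (y:ℝ)^(-α) ≤ ((i:ℝ)/2)^(-α) :=
        rpow_le_rpow_of_nonpos (by linarith) hyhalf (by linarith)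
      have hw3 : ((i:ℝ)/2)^(-α) ≤ 2 * (i:ℝ)^(-α) := by
        rw [Real.div_rpow hI0.le (by norm_num : (0:ℝ) ≤ 2)]
        rw [div_le_iff₀ (rpow_pos_of_pos two_pos _)]
        have hhalf : (2:ℝ)^(-α) * 2^α = 1 := by
          rw [← Real.rpow_add two_pos]; norm_num
        have h2le : (2:ℝ)^α ≤ 2 := by
          have := rpow_le_rpow_of_exponent_le one_le_two hα1.le
          rwa [Real.rpow_one] at this
        have hin : (0:ℝ) ≤ (i:ℝ)^(-α) := rpow_nonneg hI0.le _
        have hu : (0:ℝ) < (2:ℝ)^α := rpow_pos_of_pos two_pos α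
        have h7 : (1:ℝ) ≤ 2 * 2^(-α) := by
          rw [Real.rpow_neg (by norm_num : (0:ℝ) ≤ 2), ← div_eq_mul_inv, le_div_iff₀ hu]
          linarith
        calc (i:ℝ)^(-α) = (i:ℝ)^(-α) * 1 := by ring
          _ ≤ (i:ℝ)^(-α) * (2 * 2^(-α)) := mul_le_mul_of_nonneg_left h7 hin
          _ = 2 * (i:ℝ)^(-α) * 2^(-α) := by ring
      have hα_inv : (1:ℝ)/α ≤ 2 := by
        rw [div_le_iff₀ hα0]; linarith
      have hDy := hD0 y
      have hterm : Real.exp ((y:ℝ)^α) * ((max y 1 : ℕ):ℝ)^(-α)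
          ≤ (1/α) * ((y:ℝ)+1)^(1-α) * D y * ((y:ℝ))^(-α) := by
        rw [hmaxy]
        exact mul_le_mul_of_nonneg_right hexp_le (rpow_nonneg (Nat.cast_nonneg y) _)
      have hchain : (1/α) * ((y:ℝ)+1)^(1-α) * D y * ((y:ℝ))^(-α) ≤ C * D y := by
        have A1 : (1/α) * ((y:ℝ)+1)^(1-α) * ((y:ℝ))^(-α)
            ≤ (2 * ((i:ℝ)^(1-α))) * (2 * (i:ℝ)^(-α)) := by
          apply mul_le_mul _ (hw2.trans hw3) (rpow_nonneg (Nat.cast_nonneg y) _) (by positivity)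
          exact mul_le_mul hα_inv hw1 (rpow_nonneg (by linarith) _) (by norm_num)
        have A2 : (2 * ((i:ℝ)^(1-α))) * (2 * (i:ℝ)^(-α)) = C := by
          have e2 : (2 * ((i:ℝ)^(1-α))) * (2 * (i:ℝ)^(-α))
              = 4 * ((i:ℝ)^(1-α) * (i:ℝ)^(-α)) := by ring
          have e3 : (1-α) + (-α) = 1 - 2*α := by ring
          rw [hC, e2, ← Real.rpow_add hI0, e3]
        calc (1/α) * ((y:ℝ)+1)^(1-α) * D y * ((y:ℝ))^(-α)
            = ((1/α) * ((y:ℝ)+1)^(1-α) * ((y:ℝ))^(-α)) * D y := by ring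
          _ ≤ ((2 * ((i:ℝ)^(1-α))) * (2 * (i:ℝ)^(-α))) * D y :=
              mul_le_mul_of_nonneg_right A1 hDy
          _ = C * D y := by rw [A2]
      have hEpos : 0 ≤ E := (Real.exp_pos _).le
      linarith [hterm.trans hchain]
  have hsumD : ∑ y ∈ Finset.range i, D y = Real.exp ((i:ℝ)^α) - 1 := by
    have hDg : ∀ y : ℕ, D y = (fun n : ℕ => Real.exp ((n:ℝ)^α)) (y+1)
        - (fun n : ℕ => Real.exp ((n:ℝ)^α)) y := by
      intro y; simp only [hD]; push_cast; ring_nf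
    rw [Finset.sum_congr rfl (fun y _ => hDg y)]
    have h := Finset.sum_range_sub (fun n : ℕ => Real.exp ((n:ℝ)^α)) i
    rw [h]
    simp [Real.zero_rpow hα0.ne']
  have hiE : (i:ℝ) * E ≤ 100 * ((i:ℝ)^(1-2*α) * Real.exp ((i:ℝ)^α)) := by
    set T : ℝ := (i:ℝ)^α with hT
    have hT0 : 0 ≤ T := rpow_nonneg hI0.le _
    set r : ℝ := (2:ℝ)^(-α) with hr
    have hr0 : 0 < r := rpow_pos_of_pos two_pos _
    have hr71 : r ≤ 71/100 := by
      have h1 : (2:ℝ)^(-α) ≤ (2:ℝ)^(-(1/2:ℝ)) :=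
        rpow_le_rpow_of_exponent_le one_le_two (by linarith)
      have h2 : (2:ℝ)^(-(1/2:ℝ)) = (Real.sqrt 2)⁻¹ := by
        rw [Real.rpow_neg (by norm_num : (0:ℝ) ≤ 2), Real.sqrt_eq_rpow]
      have h3 : (100:ℝ)/71 ≤ Real.sqrt 2 := by
        nlinarith [Real.sq_sqrt (show (0:ℝ) ≤ 2 by norm_num), Real.sqrt_nonneg 2]
      have hs2 : (0:ℝ) < Real.sqrt 2 := by positivity
      have h4 : (Real.sqrt 2)⁻¹ ≤ 71/100 := by
        rw [inv_le_comm₀ hs2 (by norm_num)]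
        calc (71/100:ℝ)⁻¹ = 100/71 := by norm_num
          _ ≤ Real.sqrt 2 := h3
      calc r = (2:ℝ)^(-α) := hr
        _ ≤ (2:ℝ)^(-(1/2:ℝ)) := h1
        _ = (Real.sqrt 2)⁻¹ := h2
        _ ≤ 71/100 := h4
    have hsplit : ((i:ℝ)/2)^α = T * r := by
      rw [Real.div_rpow hI0.le (by norm_num : (0:ℝ) ≤ 2), hr,
        Real.rpow_neg (by norm_num : (0:ℝ) ≤ 2), div_eq_mul_inv]
    have hTsq : T^2 = (i:ℝ)^(2*α) := by
      rw [hT, ← Real.rpow_natCast ((i:ℝ)^α) 2, ← Real.rpow_mul hI0.le]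
      norm_num [mul_comm]
    have hkey : (i:ℝ)^(2*α) ≤ 100 * Real.exp (T*(1-r)) := by
      have hs0 : 0 ≤ T*(1-r) := by nlinarith
      have h5 : (T*(1-r))^2/4 ≤ Real.exp (T*(1-r)) := exp_ge_quarter_sq hs0
      have h6 : T^2 * (29/100)^2 ≤ (T*(1-r))^2 := by
        have hq : (29/100:ℝ)^2 ≤ (1-r)^2 := by nlinarith [hr71, hr0]
        calc T^2 * (29/100)^2 ≤ T^2 * (1-r)^2 := mul_le_mul_of_nonneg_left hq (sq_nonneg T)
          _ = (T*(1-r))^2 := by ring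
      rw [← hTsq]
      nlinarith
    have hexp_split : Real.exp T = Real.exp (T*r) * Real.exp (T*(1-r)) := by
      rw [← Real.exp_add]; ring_nf
    have hPQ : (i:ℝ)^(1-2*α) * (i:ℝ)^(2*α) = (i:ℝ) := by
      have e4 : (1-2*α) + (2*α) = 1 := by ring
      rw [← Real.rpow_add hI0, e4, Real.rpow_one]
    have hP0 : (0:ℝ) ≤ (i:ℝ)^(1-2*α) := rpow_nonneg hI0.le _
    rw [hE, hsplit, hT]
    calc (i:ℝ) * Real.exp ((i:ℝ)^α * r)
        = (i:ℝ)^(1-2*α) * (i:ℝ)^(2*α) * Real.exp ((i:ℝ)^α*r) := by rw [hPQ]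
      _ ≤ (i:ℝ)^(1-2*α) * (100 * Real.exp ((i:ℝ)^α*(1-r))) * Real.exp ((i:ℝ)^α*r) := by
          apply mul_le_mul_of_nonneg_right _ (Real.exp_pos _).le
          exact mul_le_mul_of_nonneg_left hkey hP0
      _ = 100 * ((i:ℝ)^(1-2*α) * Real.exp ((i:ℝ)^α)) := by
          rw [show Real.exp ((i:ℝ)^α) = Real.exp ((i:ℝ)^α*r) * Real.exp ((i:ℝ)^α*(1-r)) from
            hexp_split]
          ring
  calc ∑ y ∈ Finset.Icc 0 (i-1), Real.exp ((y:ℝ)^α) * ((max y 1 : ℕ):ℝ)^(-α)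
      = ∑ y ∈ Finset.range i, Real.exp ((y:ℝ)^α) * ((max y 1 : ℕ):ℝ)^(-α) := by rw [hIcc]
    _ ≤ ∑ y ∈ Finset.range i, (E + C * D y) := Finset.sum_le_sum hpoint
    _ = (i:ℝ) * E + C * ∑ y ∈ Finset.range i, D y := by
        rw [Finset.sum_add_distrib, Finset.sum_const, Finset.mul_sum]
        simp [nsmul_eq_mul]
    _ = (i:ℝ) * E + C * (Real.exp ((i:ℝ)^α) - 1) := by rw [hsumD]
    _ ≤ 100 * ((i:ℝ)^(1-2*α) * Real.exp ((i:ℝ)^α)) + C * Real.exp ((i:ℝ)^α) := by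
        nlinarith [hiE, hC0]
    _ ≤ 104 * ((i:ℝ)^(1-2*α) * Real.exp ((i:ℝ)^α)) := by
        rw [hC]
        nlinarith [Real.exp_pos ((i:ℝ)^α), rpow_nonneg hI0.le (1-2*α)]

/-- For every `d ≥ 2` there is `k = k(d) ≥ 1` such that for all `N ≥ 1` and
all `1 ≤ i ≤ N^d`:
`(1/k) i^{1-2α} e^{i^α} ≤ B₋(N,i) ≤ k i^{1-2α} e^{i^α}`. -/
theorem Bminus_asymptotics (d : ℕ) (hd : 2 ≤ d) :
    ∃ k : ℝ, 1 ≤ k ∧ ∀ N : ℕ, 1 ≤ N → ∀ i : ℕ, 1 ≤ i → i ≤ N ^ d →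
      (1 / k) * (i : ℝ) ^ (1 - 2 * alphaOf d) * Real.exp ((i : ℝ) ^ alphaOf d) ≤
        Bminus d N i ∧
      Bminus d N i ≤
        k * (i : ℝ) ^ (1 - 2 * alphaOf d) * Real.exp ((i : ℝ) ^ alphaOf d) := by
  have hd2 : (2:ℝ) ≤ (d:ℝ) := by exact_mod_cast hd
  have hαdef : alphaOf d = ((d:ℝ) - 1) / d := rfl
  have hα2 : 1/2 ≤ alphaOf d := by
    rw [hαdef, le_div_iff₀ (by linarith : (0:ℝ) < (d:ℝ))]; linarith
  have hα1 : alphaOf d < 1 := by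
    rw [hαdef, div_lt_one (by linarith : (0:ℝ) < (d:ℝ))]; linarith
  have hα0 : 0 < alphaOf d := by linarith
  refine ⟨1000000, by norm_num, ?_⟩
  intro N hN i hi hiN
  have hI0 : (0:ℝ) < (i:ℝ) := by exact_mod_cast hi
  have hI1 : (1:ℝ) ≤ (i:ℝ) := by exact_mod_cast hi
  have hbdd : BddAbove ((fun x : ℕ =>
      (∑ y ∈ Finset.Icc x (i - 1),
        Real.exp ((y : ℝ) ^ alphaOf d) * ((max y 1 : ℕ) : ℝ) ^ (-alphaOf d)) *
      (∑ y ∈ Finset.range (x + 1), Real.exp (-(y : ℝ) ^ alphaOf d))) ''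
    {x : ℕ | x < i}) := ((Set.finite_Iio i).image _).bddAbove
  have hT1 : ∀ x : ℕ, (1:ℝ) ≤ ∑ y ∈ Finset.range (x+1), Real.exp (-(y:ℝ)^alphaOf d) := by
    intro x
    have h := Finset.single_le_sum (f := fun y : ℕ => Real.exp (-(y:ℝ)^alphaOf d))
      (fun y _ => (Real.exp_pos _).le) (Finset.mem_range.mpr (Nat.succ_pos x))
    simpa [Real.zero_rpow hα0.ne'] using h
  constructor
  · -- lower bound
    unfold Bminus
    rcases lt_or_ge i 4 with hsmall | hbig
    · -- small i : use x = 0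
      have hmem := Set.mem_image_of_mem (fun x : ℕ =>
          (∑ y ∈ Finset.Icc x (i - 1),
            Real.exp ((y : ℝ) ^ alphaOf d) * ((max y 1 : ℕ) : ℝ) ^ (-alphaOf d)) *
          (∑ y ∈ Finset.range (x + 1), Real.exp (-(y : ℝ) ^ alphaOf d)))
        (show (0:ℕ) ∈ {x : ℕ | x < i} from hi)
      have hle := le_csSup hbdd hmem
      have hS1 : (1:ℝ) ≤ ∑ y ∈ Finset.Icc 0 (i-1),
          Real.exp ((y : ℝ) ^ alphaOf d) * ((max y 1 : ℕ) : ℝ) ^ (-alphaOf d) := by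
        have h := Finset.single_le_sum
          (f := fun y : ℕ => Real.exp ((y : ℝ) ^ alphaOf d) * ((max y 1 : ℕ) : ℝ) ^ (-alphaOf d))
          (s := Finset.Icc 0 (i-1))
          (fun y _ => by positivity)
          (show (0:ℕ) ∈ Finset.Icc 0 (i-1) from Finset.mem_Icc.mpr ⟨le_rfl, Nat.zero_le _⟩)
        simpa [Real.zero_rpow hα0.ne'] using h
      have hF1 : (1:ℝ) ≤ (∑ y ∈ Finset.Icc 0 (i-1),
          Real.exp ((y : ℝ) ^ alphaOf d) * ((max y 1 : ℕ) : ℝ) ^ (-alphaOf d)) *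
          (∑ y ∈ Finset.range (0 + 1), Real.exp (-(y : ℝ) ^ alphaOf d)) := by
        have := hT1 0
        nlinarith [hS1, hT1 0]
      have hpow1 : (i:ℝ)^(1-2*alphaOf d) ≤ 1 :=
        rpow_le_one_of_one_le_of_nonpos hI1 (by linarith)
      have hexp21 : Real.exp ((i:ℝ)^alphaOf d) ≤ 21 := by
        have h1 : (i:ℝ)^alphaOf d ≤ (i:ℝ) := by
          have := rpow_le_rpow_of_exponent_le hI1 hα1.le
          rwa [Real.rpow_one] at this
        have h2 : (i:ℝ) ≤ 3 := by exact_mod_cast Nat.lt_succ_iff.mp hsmall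
        have h3 : Real.exp ((i:ℝ)^alphaOf d) ≤ Real.exp 3 := Real.exp_le_exp.mpr (by linarith)
        have h4 : Real.exp 3 = (Real.exp 1)^3 := by
          rw [← Real.exp_nat_mul]; norm_num
        have h5 := Real.exp_one_lt_d9
        have h6 := Real.exp_pos 1
        have e2 : Real.exp 1 ^ 2 ≤ 7.4 := by nlinarith
        have e3' : Real.exp 1 ^ 3 ≤ 21 := by
          nlinarith [mul_le_mul_of_nonneg_right e2 h6.le]
        calc Real.exp ((i:ℝ)^alphaOf d) ≤ Real.exp 3 := h3
          _ = (Real.exp 1)^3 := h4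
          _ ≤ 21 := e3'
      have hpow0 : (0:ℝ) ≤ (i:ℝ)^(1-2*alphaOf d) := rpow_nonneg hI0.le _
      have hexp0 : (0:ℝ) < Real.exp ((i:ℝ)^alphaOf d) := Real.exp_pos _
      nlinarith [hF1, hle]
    · -- large i
      have hI4 : (4:ℝ) ≤ (i:ℝ) := by exact_mod_cast hbig
      have hIA : (1:ℝ) ≤ (i:ℝ)^(1-alphaOf d) := one_le_rpow hI1 (by linarith)
      set m : ℕ := max 1 (Nat.floor ((i:ℝ)^(1-alphaOf d))) with hm
      have hm1 : 1 ≤ m := le_max_left 1 _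
      have hm1R : (1:ℝ) ≤ (m:ℝ) := by exact_mod_cast hm1
      have hm_le : (m:ℝ) ≤ (i:ℝ)^(1-alphaOf d) := by
        rw [hm]
        push_cast
        exact max_le hIA (Nat.floor_le (by positivity))
      have hm_ge : (i:ℝ)^(1-alphaOf d)/2 ≤ (m:ℝ) := by
        rcases le_or_gt ((i:ℝ)^(1-alphaOf d)) 2 with h | h
        · linarith
        · have hfl : (i:ℝ)^(1-alphaOf d) - 1 < (Nat.floor ((i:ℝ)^(1-alphaOf d)) : ℝ) :=
            Nat.sub_one_lt_floor _
          have hfm : (Nat.floor ((i:ℝ)^(1-alphaOf d)) : ℝ) ≤ (m:ℝ) := by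
            exact_mod_cast le_max_right 1 (Nat.floor ((i:ℝ)^(1-alphaOf d)))
          linarith
      have hsqrt : (i:ℝ)^(1-alphaOf d) ≤ (i:ℝ)/2 := by
        have h1 : (i:ℝ)^(1-alphaOf d) ≤ (i:ℝ)^((1:ℝ)/2) :=
          rpow_le_rpow_of_exponent_le hI1 (by linarith)
        have h2 : (i:ℝ)^((1:ℝ)/2) = Real.sqrt (i:ℝ) := (Real.sqrt_eq_rpow _).symm
        have h3 : Real.sqrt (i:ℝ) ≤ (i:ℝ)/2 := by
          nlinarith [Real.sq_sqrt hI0.le, Real.sqrt_nonneg (i:ℝ),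
            sq_nonneg (Real.sqrt (i:ℝ) - 2)]
        linarith [h1.trans_eq h2]
      have hmI2 : (m:ℝ) ≤ (i:ℝ)/2 := hm_le.trans hsqrt
      have hmi : m ≤ i := by
        have : (m:ℝ) ≤ (i:ℝ) := by linarith
        exact_mod_cast this
      set x0 : ℕ := i - m with hx0
      have hx0cast : (x0:ℝ) = (i:ℝ) - (m:ℝ) := by
        rw [hx0]; push_cast [Nat.cast_sub hmi]; ring
      have hx0half : (i:ℝ)/2 ≤ (x0:ℝ) := by rw [hx0cast]; linarith
      have hx02 : (2:ℝ) ≤ (x0:ℝ) := by linarith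
      have hx0lt : x0 < i := by omega
      -- exponent bound : i^α ≤ x0^α + 2
      have hxa : (i:ℝ)^alphaOf d ≤ (x0:ℝ)^alphaOf d + 2 := by
        have hb := bern_upper hα0.le hα1.le (show (1:ℝ) ≤ (x0:ℝ) by linarith)
          (show (x0:ℝ) ≤ (i:ℝ) by rw [hx0cast]; linarith)
        have hdiff : (i:ℝ) - (x0:ℝ) = (m:ℝ) := by rw [hx0cast]; ring
        rw [hdiff] at hb
        have hwa : (x0:ℝ)^(alphaOf d-1) ≤ ((i:ℝ)/2)^(alphaOf d-1) :=
          rpow_le_rpow_of_nonpos (by linarith) hx0half (by linarith)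
        have hw2' : ((i:ℝ)/2)^(alphaOf d-1) = (i:ℝ)^(alphaOf d-1) * 2^(1-alphaOf d) := by
          rw [Real.div_rpow hI0.le (by norm_num : (0:ℝ) ≤ 2), div_eq_mul_inv,
            ← Real.rpow_neg (by norm_num : (0:ℝ) ≤ 2),
            show -(alphaOf d-1) = 1-alphaOf d from by ring]
        have h2e : (2:ℝ)^(1-alphaOf d) ≤ 2 := by
          have := rpow_le_rpow_of_exponent_le one_le_two
            (show 1-alphaOf d ≤ 1 by linarith)
          rwa [Real.rpow_one] at this
        have hma : (i:ℝ)^(alphaOf d-1) * (i:ℝ)^(1-alphaOf d) = 1 := by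
          rw [← Real.rpow_add hI0]; norm_num
        have hstep : (x0:ℝ)^(alphaOf d-1) * (m:ℝ) ≤ 2 := by
          have hA : (x0:ℝ)^(alphaOf d-1) * (m:ℝ)
              ≤ ((i:ℝ)^(alphaOf d-1) * 2^(1-alphaOf d)) * ((i:ℝ)^(1-alphaOf d)) := by
            apply mul_le_mul (hwa.trans_eq hw2') hm_le (by linarith) (by positivity)
          have hB : ((i:ℝ)^(alphaOf d-1) * 2^(1-alphaOf d)) * ((i:ℝ)^(1-alphaOf d))
              = 2^(1-alphaOf d) := by
            rw [mul_comm ((i:ℝ)^(alphaOf d-1)) ((2:ℝ)^(1-alphaOf d)), mul_assoc, hma, mul_one]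
          linarith [hA.trans_eq hB]
        have hx0p : (0:ℝ) ≤ (x0:ℝ)^(alphaOf d-1) * (m:ℝ) := by positivity
        have hαx : alphaOf d * ((x0:ℝ)^(alphaOf d-1) * (m:ℝ)) ≤ 2 := by
          nlinarith
        rw [← mul_assoc] at hαx
        linarith
      -- term bounds
      have hterm : ∀ y ∈ Finset.Icc x0 (i-1),
          Real.exp ((x0:ℝ)^alphaOf d) * (i:ℝ)^(-alphaOf d)
            ≤ Real.exp ((y:ℝ)^alphaOf d) * ((max y 1:ℕ):ℝ)^(-alphaOf d) := by
        intro y hy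
        rw [Finset.mem_Icc] at hy
        have hyx : (x0:ℝ) ≤ (y:ℝ) := by exact_mod_cast hy.1
        have hexpy : Real.exp ((x0:ℝ)^alphaOf d) ≤ Real.exp ((y:ℝ)^alphaOf d) :=
          Real.exp_le_exp.mpr (rpow_le_rpow (by positivity) hyx hα0.le)
        have hmaxle : ((max y 1:ℕ):ℝ) ≤ (i:ℝ) := by
          have : max y 1 ≤ i := by omega
          exact_mod_cast this
        have hmax0 : (0:ℝ) < ((max y 1:ℕ):ℝ) := by
          have : 0 < max y 1 := by omega
          exact_mod_cast this
        have hP : (i:ℝ)^(-alphaOf d) ≤ ((max y 1:ℕ):ℝ)^(-alphaOf d) :=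
          rpow_le_rpow_of_nonpos hmax0 hmaxle (by linarith)
        exact mul_le_mul hexpy hP (rpow_nonneg hI0.le _) (Real.exp_pos _).le
      have hcard : (Finset.Icc x0 (i-1)).card = m := by
        rw [Nat.card_Icc]; omega
      have hsumlow : (m:ℝ) * (Real.exp ((x0:ℝ)^alphaOf d) * (i:ℝ)^(-alphaOf d))
          ≤ ∑ y ∈ Finset.Icc x0 (i-1),
              Real.exp ((y:ℝ)^alphaOf d) * ((max y 1:ℕ):ℝ)^(-alphaOf d) := by
        have h := Finset.card_nsmul_le_sum (Finset.Icc x0 (i-1)) _ _ hterm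
        rwa [hcard, nsmul_eq_mul] at h
      -- exp comparison
      have hexp2 : Real.exp ((i:ℝ)^alphaOf d) ≤ 9 * Real.exp ((x0:ℝ)^alphaOf d) := by
        have h1 : Real.exp ((i:ℝ)^alphaOf d) ≤ Real.exp ((x0:ℝ)^alphaOf d + 2) :=
          Real.exp_le_exp.mpr hxa
        rw [Real.exp_add] at h1
        have h2 : Real.exp 2 ≤ 9 := by
          have h5 := Real.exp_one_lt_d9
          have h6 := Real.exp_pos 1
          have h7 : Real.exp 2 = (Real.exp 1)^2 := by rw [← Real.exp_nat_mul]; norm_num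
          have e2 : Real.exp 1 ^ 2 ≤ 7.4 := by nlinarith
          linarith [h7.le.trans e2]
        nlinarith [Real.exp_pos ((x0:ℝ)^alphaOf d)]
      -- assemble
      have hmem := Set.mem_image_of_mem (fun x : ℕ =>
          (∑ y ∈ Finset.Icc x (i - 1),
            Real.exp ((y : ℝ) ^ alphaOf d) * ((max y 1 : ℕ) : ℝ) ^ (-alphaOf d)) *
          (∑ y ∈ Finset.range (x + 1), Real.exp (-(y : ℝ) ^ alphaOf d)))
        (show x0 ∈ {x : ℕ | x < i} from hx0lt)
      have hle := le_csSup hbdd hmem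
      have hS0 : (0:ℝ) ≤ ∑ y ∈ Finset.Icc x0 (i-1),
          Real.exp ((y:ℝ)^alphaOf d) * ((max y 1:ℕ):ℝ)^(-alphaOf d) := by
        apply Finset.sum_nonneg; intro y _; positivity
      have hFx0 : (m:ℝ) * (Real.exp ((x0:ℝ)^alphaOf d) * (i:ℝ)^(-alphaOf d))
          ≤ (∑ y ∈ Finset.Icc x0 (i - 1),
            Real.exp ((y : ℝ) ^ alphaOf d) * ((max y 1 : ℕ) : ℝ) ^ (-alphaOf d)) *
          (∑ y ∈ Finset.range (x0 + 1), Real.exp (-(y : ℝ) ^ alphaOf d)) := by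
        calc (m:ℝ) * (Real.exp ((x0:ℝ)^alphaOf d) * (i:ℝ)^(-alphaOf d))
            ≤ ∑ y ∈ Finset.Icc x0 (i-1),
                Real.exp ((y:ℝ)^alphaOf d) * ((max y 1:ℕ):ℝ)^(-alphaOf d) := hsumlow
          _ ≤ _ := le_mul_of_one_le_right hS0 (hT1 x0)
      -- numeric chain
      have hPQ : (i:ℝ)^(1-alphaOf d) * (i:ℝ)^(-alphaOf d) = (i:ℝ)^(1-2*alphaOf d) := by
        rw [← Real.rpow_add hI0, show (1-alphaOf d)+(-alphaOf d) = 1-2*alphaOf d from by ring]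
      have hchain : (1/1000000:ℝ) * (i:ℝ)^(1-2*alphaOf d) * Real.exp ((i:ℝ)^alphaOf d)
          ≤ (m:ℝ) * (Real.exp ((x0:ℝ)^alphaOf d) * (i:ℝ)^(-alphaOf d)) := by
        have hA1 : (i:ℝ)^(1-alphaOf d)/2 * (Real.exp ((i:ℝ)^alphaOf d)/9) * (i:ℝ)^(-alphaOf d)
            ≤ (m:ℝ) * Real.exp ((x0:ℝ)^alphaOf d) * (i:ℝ)^(-alphaOf d) := by
          apply mul_le_mul_of_nonneg_right _ (rpow_nonneg hI0.le _)
          exact mul_le_mul hm_ge (by linarith) (by positivity) (by linarith)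
        have hA2 : (i:ℝ)^(1-alphaOf d)/2 * (Real.exp ((i:ℝ)^alphaOf d)/9) * (i:ℝ)^(-alphaOf d)
            = (1/18:ℝ) * (i:ℝ)^(1-2*alphaOf d) * Real.exp ((i:ℝ)^alphaOf d) := by
          linear_combination (Real.exp ((i:ℝ)^alphaOf d)/18) * hPQ
        have hA3 : (1/1000000:ℝ) * (i:ℝ)^(1-2*alphaOf d) * Real.exp ((i:ℝ)^alphaOf d)
            ≤ (1/18:ℝ) * (i:ℝ)^(1-2*alphaOf d) * Real.exp ((i:ℝ)^alphaOf d) := by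
          have : (0:ℝ) ≤ (i:ℝ)^(1-2*alphaOf d) * Real.exp ((i:ℝ)^alphaOf d) := by positivity
          nlinarith
        calc (1/1000000:ℝ) * (i:ℝ)^(1-2*alphaOf d) * Real.exp ((i:ℝ)^alphaOf d)
            ≤ (1/18:ℝ) * (i:ℝ)^(1-2*alphaOf d) * Real.exp ((i:ℝ)^alphaOf d) := hA3
          _ = (i:ℝ)^(1-alphaOf d)/2 * (Real.exp ((i:ℝ)^alphaOf d)/9) * (i:ℝ)^(-alphaOf d) :=
              hA2.symm
          _ ≤ (m:ℝ) * Real.exp ((x0:ℝ)^alphaOf d) * (i:ℝ)^(-alphaOf d) := hA1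
          _ = (m:ℝ) * (Real.exp ((x0:ℝ)^alphaOf d) * (i:ℝ)^(-alphaOf d)) := by ring
      linarith [hchain.trans (hFx0.trans hle)]
  · -- upper bound
    unfold Bminus
    apply Real.sSup_le
    · rintro z ⟨x, hx, rfl⟩
      simp only [Set.mem_setOf_eq] at hx
      have hS : (∑ y ∈ Finset.Icc x (i-1),
          Real.exp ((y:ℝ)^alphaOf d) * ((max y 1:ℕ):ℝ)^(-alphaOf d))
          ≤ 104 * ((i:ℝ)^(1-2*alphaOf d) * Real.exp ((i:ℝ)^alphaOf d)) := by
        refine le_trans (Finset.sum_le_sum_of_subset_of_nonneg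
          (Finset.Icc_subset_Icc (Nat.zero_le x) le_rfl) ?_) (S_bound hα2 hα1 i hi)
        intro y _ _
        positivity
      have hS0 : (0:ℝ) ≤ ∑ y ∈ Finset.Icc x (i-1),
          Real.exp ((y:ℝ)^alphaOf d) * ((max y 1:ℕ):ℝ)^(-alphaOf d) := by
        apply Finset.sum_nonneg; intro y _; positivity
      have hT := T_bound hα2 x
      have hT0 : (0:ℝ) ≤ ∑ y ∈ Finset.range (x+1), Real.exp (-(y:ℝ)^alphaOf d) := by
        apply Finset.sum_nonneg; intro y _; exact (Real.exp_pos _).le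
      have hprod : (∑ y ∈ Finset.Icc x (i-1),
          Real.exp ((y:ℝ)^alphaOf d) * ((max y 1:ℕ):ℝ)^(-alphaOf d)) *
          (∑ y ∈ Finset.range (x+1), Real.exp (-(y:ℝ)^alphaOf d))
          ≤ (104 * ((i:ℝ)^(1-2*alphaOf d) * Real.exp ((i:ℝ)^alphaOf d))) * 2048 :=
        mul_le_mul hS hT hT0 (by positivity)
      have hpos : (0:ℝ) ≤ (i:ℝ)^(1-2*alphaOf d) * Real.exp ((i:ℝ)^alphaOf d) := by positivity
      calc _ ≤ (104 * ((i:ℝ)^(1-2*alphaOf d) * Real.exp ((i:ℝ)^alphaOf d))) * 2048 := hprod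
        _ ≤ 1000000 * (i:ℝ)^(1-2*alphaOf d) * Real.exp ((i:ℝ)^alphaOf d) := by nlinarith
    · positivity


end
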